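/- Let $U_{max} > 0$, $\lambda > 0$, and suppose $A(s) = \lambda \sin(\sqrt{1 + U_{max}^2}\, s - \phi)$ with $A(0) = 0$, $A'(0) = -\lambda\sqrt{1+U_{max}^2}$, and $s_1 > 0$ is the smallest positive value with $A(s_1) = 0$ and $A'(s_1) = \lambda\sqrt{1+U_{max}^2}$. Then $\sqrt{1+U_{max}^2}\, s_1 = \pi$; equivalently, with turning radius $r = 1/\sqrt{1+U_{max}^2}$, the arc length $s_1$ corresponds to a turn angle of exactly $\pi$. -/

import Mathlib

open Real

theorem stmt_2 (Umax lam φ : ℝ) (hU : 0 < Umax) (hlam : 0 < lam)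
    (A : ℝ → ℝ)
    (hA : ∀ s, A s = lam * Real.sin (Real.sqrt (1 + Umax ^ 2) * s - φ))
    (h0 : A 0 = 0)
    (h0' : deriv A 0 = -lam * Real.sqrt (1 + Umax ^ 2))
    (s₁ : ℝ) (hs₁ : 0 < s₁)
    (hend : A s₁ = 0 ∧ deriv A s₁ = lam * Real.sqrt (1 + Umax ^ 2))
    (hmin : ∀ s, 0 < s → s < s₁ →
      ¬(A s = 0 ∧ deriv A s = lam * Real.sqrt (1 + Umax ^ 2))) :
    Real.sqrt (1 + Umax ^ 2) * s₁ = Real.pi ∧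
    s₁ = Real.pi * (1 / Real.sqrt (1 + Umax ^ 2)) := by
  set ω := Real.sqrt (1 + Umax ^ 2) with hωdef
  have hω : 0 < ω := Real.sqrt_pos.2 (by positivity)
  have hfun : A = fun s => lam * Real.sin (ω * s - φ) := funext hA
  have hderiv : ∀ s, deriv A s = lam * ω * Real.cos (ω * s - φ) := by
    intro s
    have h1 : HasDerivAt (fun s : ℝ => ω * s - φ) ω s := by
      simpa using ((hasDerivAt_id s).const_mul ω).sub_const φ
    have h2 : HasDerivAt (fun s : ℝ => Real.sin (ω * s - φ))
        (Real.cos (ω * s - φ) * ω) s := (Real.hasDerivAt_sin _).comp s h1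
    have h3 : HasDerivAt A (lam * (Real.cos (ω * s - φ) * ω)) s := by
      rw [hfun]; exact h2.const_mul lam
    rw [h3.deriv]; ring
  have hlω : 0 < lam * ω := mul_pos hlam hω
  have hc0 : Real.cos (ω * 0 - φ) = -1 := by
    have := h0'
    rw [hderiv 0] at this
    have h : lam * ω * Real.cos (ω * 0 - φ) = lam * ω * (-1) := by
      rw [this]; ring
    exact mul_left_cancel₀ (ne_of_gt hlω) h
  have hc1 : Real.cos (ω * s₁ - φ) = 1 := by
    have := hend.2
    rw [hderiv s₁] at this
    have h : lam * ω * Real.cos (ω * s₁ - φ) = lam * ω * 1 := by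
      rw [this]; ring
    exact mul_left_cancel₀ (ne_of_gt hlω) h
  obtain ⟨k, hk⟩ := Real.cos_eq_neg_one_iff.1 (by simpa using hc0)
  obtain ⟨n, hn⟩ := (Real.cos_eq_one_iff _).1 hc1
  have hφ : φ = π + k * (2 * π) := hk.symm
  have hθ : ω * s₁ = (2 * ((n : ℝ) + k) + 1) * π := by
    have h1 : (n : ℝ) * (2 * π) = ω * s₁ - φ := hn
    rw [hφ] at h1
    linarith
  have hmnn : (0 : ℤ) ≤ n + k := by
    by_contra h
    push_neg at h
    have h2 : ((n : ℝ) + k) ≤ -1 := by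
      have : (n + k : ℤ) ≤ -1 := by omega
      exact_mod_cast this
    have hp : (0:ℝ) < ω * s₁ := mul_pos hω hs₁
    rw [hθ] at hp
    nlinarith [Real.pi_pos]
  have hmeq : n + k = 0 := by
    by_contra h
    have hm2 : 1 ≤ n + k := by omega
    set s := π / ω with hs
    have hspos : 0 < s := div_pos Real.pi_pos hω
    have hωs : ω * s = π := by rw [hs]; field_simp [hω.ne']
    have hslt : s < s₁ := by
      have h3 : (1:ℝ) ≤ (n : ℝ) + k := by exact_mod_cast hm2
      have : ω * s < ω * s₁ := by
        rw [hωs, hθ]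
        nlinarith [Real.pi_pos]
      exact lt_of_mul_lt_mul_left this hω.le
    refine hmin s hspos hslt ⟨?_, ?_⟩
    · rw [hA, hωs, hφ]
      have he : (π - (π + (k:ℝ) * (2 * π))) = (-2 * k : ℤ) * π := by push_cast; ring
      rw [he, Real.sin_int_mul_pi, mul_zero]
    · rw [hderiv, hωs, hφ]
      have he : Real.cos (π - (π + (k:ℝ) * (2 * π))) = 1 :=
        (Real.cos_eq_one_iff _).2 ⟨-k, by push_cast; ring⟩
      rw [he, mul_one]
  have hfin : ω * s₁ = π := by
    have : ((n : ℝ) + k) = 0 := by exact_mod_cast hmeq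
    rw [hθ, this]; ring
  refine ⟨hfin, ?_⟩
  field_simp
  linarith [hfin]
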